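/- Let P be a Polish space, X a compact metrizable space, α a countable ordinal with α ≥ 1, and f : P → K(X) a map into the hyperspace of compact subsets of X with the Vietoris topology. If for every open W ⊆ X the set {p ∈ P : f(p) ⊆ W} belongs to Σ⁰_α(P) ∪ Π⁰_α(P), then f is Σ⁰_{α+1}-measurable. -/

import Mathlib

open Topology

/-- The additive Borel class `Σ⁰_o` of subsets of a topological space: `Σ⁰_o` for `o ≤ 1`
is the class of open sets, and for `o > 1` it consists of countable unions of sets whose
complements lie in `Σ⁰_β` for some `β < o`. -/
noncomputable def sigma0 {X : Type*} [TopologicalSpace X] (o : Ordinal.{0}) :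
    Set (Set X) :=
  if o ≤ 1 then {s | IsOpen s}
  else {s | ∃ f : ℕ → Set X,
    (∀ n, ∃ β : Ordinal.{0}, ∃ _ : β < o, (f n)ᶜ ∈ sigma0 β) ∧ s = ⋃ n, f n}
termination_by o
decreasing_by assumption

/-- The multiplicative Borel class `Π⁰_o`: complements of `Σ⁰_o` sets. -/
noncomputable def pi0 {X : Type*} [TopologicalSpace X] (o : Ordinal.{0}) : Set (Set X) :=
  {s | sᶜ ∈ sigma0 o}

/-- The Vietoris topology on subsets of a topological space. -/
def vietoris (α : Type*) [TopologicalSpace α] : TopologicalSpace (Set α) :=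
  TopologicalSpace.generateFrom
    ({S | ∃ U : Set α, IsOpen U ∧ S = {K | K ⊆ U}} ∪
     {S | ∃ U : Set α, IsOpen U ∧ S = {K | (K ∩ U).Nonempty}})

variable {Y : Type*} [TopologicalSpace Y] {o β γ : Ordinal.{0}} {s t : Set Y}

theorem sigma0_le_one (h : o ≤ 1) : sigma0 (X := Y) o = {s | IsOpen s} := by
  rw [sigma0, if_pos h]

theorem sigma0_gt_one (h : 1 < o) : sigma0 (X := Y) o =
    {s | ∃ f : ℕ → Set Y,
      (∀ n, ∃ β : Ordinal.{0}, ∃ _ : β < o, (f n)ᶜ ∈ sigma0 β) ∧ s = ⋃ n, f n} := by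
  rw [sigma0, if_neg (not_le.2 h)]

theorem fsigma_of_isOpen [TopologicalSpace.PseudoMetrizableSpace Y] (hs : IsOpen s) :
    ∃ C : ℕ → Set Y, (∀ n, IsClosed (C n)) ∧ s = ⋃ n, C n := by
  letI := TopologicalSpace.pseudoMetrizableSpacePseudoMetric Y
  obtain ⟨T, hTo, hTc, hT⟩ := (hs.isClosed_compl).isGδ
  have hne : (insert Set.univ T).Nonempty := ⟨_, Set.mem_insert _ _⟩
  obtain ⟨g, hg⟩ := (hTc.insert Set.univ).exists_eq_range hne
  refine ⟨fun n => (g n)ᶜ, fun n => ?_, ?_⟩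
  · have : g n ∈ insert Set.univ T := hg ▸ Set.mem_range_self n
    rcases this with h | h
    · simp [h]
    · exact (hTo _ h).isClosed_compl
  · have : sᶜ = ⋂ n, g n := by
      rw [hT]
      have : ⋂₀ T = ⋂₀ insert Set.univ T := by simp
      rw [this, hg, Set.sInter_range]
    rw [← Set.compl_iInter, ← this, compl_compl]

theorem isOpen_mem_sigma0 [TopologicalSpace.PseudoMetrizableSpace Y] (hs : IsOpen s) :
    s ∈ sigma0 o := by
  rcases le_or_gt o 1 with h | h
  · rw [sigma0_le_one h]; exact hs
  · rw [sigma0_gt_one h]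
    obtain ⟨C, hC, hCs⟩ := fsigma_of_isOpen hs
    exact ⟨C, fun n => ⟨1, h, by rw [sigma0_le_one le_rfl]; exact (hC n).isOpen_compl⟩, hCs⟩

theorem sigma0_mono [TopologicalSpace.PseudoMetrizableSpace Y] (hβγ : β ≤ γ)
    (hs : s ∈ sigma0 β) : s ∈ sigma0 γ := by
  rcases le_or_gt β 1 with h | h
  · rw [sigma0_le_one h] at hs
    exact isOpen_mem_sigma0 hs
  · rw [sigma0_gt_one h] at hs
    rw [sigma0_gt_one (lt_of_lt_of_le h hβγ)]
    obtain ⟨f, hf, rfl⟩ := hs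
    exact ⟨f, fun n => by obtain ⟨δ, hδ, hmem⟩ := hf n; exact ⟨δ, lt_of_lt_of_le hδ hβγ, hmem⟩, rfl⟩

theorem sigma0_union [TopologicalSpace.PseudoMetrizableSpace Y]
    (hs : s ∈ sigma0 o) (ht : t ∈ sigma0 o) : s ∪ t ∈ sigma0 o := by
  rcases le_or_gt o 1 with h | h
  · rw [sigma0_le_one h] at *; exact hs.union ht
  · rw [sigma0_gt_one h] at *
    obtain ⟨f, hf, rfl⟩ := hs
    obtain ⟨g, hg, rfl⟩ := ht
    refine ⟨fun n => if Even n then f (n / 2) else g (n / 2), fun n => ?_, ?_⟩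
    · by_cases hn : Even n
      · simpa [hn] using hf (n / 2)
      · simpa [hn] using hg (n / 2)
    · ext x
      simp only [Set.mem_union, Set.mem_iUnion]
      constructor
      · rintro (⟨n, hx⟩ | ⟨n, hx⟩)
        · exact ⟨2 * n, by simp [Nat.mul_div_cancel_left n two_pos, hx]⟩
        · refine ⟨2 * n + 1, ?_⟩
          have : ¬ Even (2 * n + 1) := by simp [Nat.even_add_one, Nat.even_mul]
          simp [this, Nat.mul_add_div two_pos, hx]
      · rintro ⟨n, hx⟩
        by_cases hn : Even n
        · simp only [hn, if_true] at hx; exact Or.inl ⟨_, hx⟩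
        · simp only [hn, if_false] at hx; exact Or.inr ⟨_, hx⟩

theorem sigma0_iUnion [TopologicalSpace.PseudoMetrizableSpace Y] (h : 1 < o)
    (s : ℕ → Set Y) (hs : ∀ n, s n ∈ sigma0 o) : (⋃ n, s n) ∈ sigma0 o := by
  have hs' : ∀ n, ∃ f : ℕ → Set Y,
      (∀ m, ∃ β : Ordinal.{0}, ∃ _ : β < o, (f m)ᶜ ∈ sigma0 β) ∧ s n = ⋃ m, f m := by
    intro n; have := hs n; rwa [sigma0_gt_one h] at this
  choose f hf hfs using hs'
  rw [sigma0_gt_one h]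
  refine ⟨fun k => f k.unpair.1 k.unpair.2, fun k => hf _ _, ?_⟩
  ext x
  simp only [Set.mem_iUnion]
  constructor
  · rintro ⟨n, hx⟩
    rw [hfs n] at hx
    obtain ⟨m, hx⟩ := Set.mem_iUnion.1 hx
    exact ⟨Nat.pair n m, by simpa [Nat.unpair_pair] using hx⟩
  · rintro ⟨k, hx⟩
    exact ⟨k.unpair.1, by rw [hfs]; exact Set.mem_iUnion.2 ⟨k.unpair.2, hx⟩⟩

theorem sigma0_inter [TopologicalSpace.PseudoMetrizableSpace Y] (h : 1 < o)
    (hs : s ∈ sigma0 o) (ht : t ∈ sigma0 o) : s ∩ t ∈ sigma0 o := by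
  rw [sigma0_gt_one h] at hs ht
  obtain ⟨f, hf, rfl⟩ := hs
  obtain ⟨g, hg, rfl⟩ := ht
  rw [sigma0_gt_one h]
  refine ⟨fun k => f k.unpair.1 ∩ g k.unpair.2, fun k => ?_, ?_⟩
  · obtain ⟨β, hβ, hβm⟩ := hf k.unpair.1
    obtain ⟨γ, hγ, hγm⟩ := hg k.unpair.2
    refine ⟨max β γ, max_lt hβ hγ, ?_⟩
    rw [Set.compl_inter]
    exact sigma0_union (sigma0_mono (le_max_left _ _) hβm) (sigma0_mono (le_max_right _ _) hγm)
  · ext x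
    simp only [Set.mem_inter_iff, Set.mem_iUnion]
    constructor
    · rintro ⟨⟨n, hn⟩, ⟨m, hm⟩⟩
      exact ⟨Nat.pair n m, by simpa [Nat.unpair_pair] using ⟨hn, hm⟩⟩
    · rintro ⟨k, hk1, hk2⟩
      exact ⟨⟨_, hk1⟩, ⟨_, hk2⟩⟩

theorem sigma0_sUnion [TopologicalSpace.PseudoMetrizableSpace Y] (h : 1 < o)
    {S : Set (Set Y)} (hSc : S.Countable) (hS : ∀ s ∈ S, s ∈ sigma0 o) :
    ⋃₀ S ∈ sigma0 o := by
  rcases S.eq_empty_or_nonempty with rfl | hne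
  · simpa using isOpen_mem_sigma0 isOpen_empty
  · obtain ⟨g, rfl⟩ := hSc.exists_eq_range hne
    rw [Set.sUnion_range]
    exact sigma0_iUnion h _ fun n => hS _ (Set.mem_range_self n)

theorem sigma0_sInter_finite [TopologicalSpace.PseudoMetrizableSpace Y] (h : 1 < o)
    {S : Set (Set Y)} (hSf : S.Finite) (hS : ∀ s ∈ S, s ∈ sigma0 o) :
    ⋂₀ S ∈ sigma0 o := by
  revert hS
  refine Set.Finite.induction_on (motive := fun S _ => (∀ s ∈ S, s ∈ sigma0 o) → ⋂₀ S ∈ sigma0 o) S hSf ?_ ?_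
  · intro _; simpa using isOpen_mem_sigma0 isOpen_univ
  · intro a S _ _ ih hS
    rw [Set.sInter_insert]
    exact sigma0_inter h (hS _ (Set.mem_insert _ _))
      (ih fun s hs => hS _ (Set.mem_insert_of_mem _ hs))

theorem mem_sigma0_succ_of_sigma0 [TopologicalSpace.PseudoMetrizableSpace Y]
    (hs : s ∈ sigma0 o) : s ∈ sigma0 (o + 1) :=
  sigma0_mono (by rw [Ordinal.add_one_eq_succ]; exact Order.le_succ o) hs

theorem mem_sigma0_succ_of_pi0 (h1 : 1 ≤ o) (hs : s ∈ pi0 o) : s ∈ sigma0 (o + 1) := by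
  have hlt : (1 : Ordinal) < o + 1 :=
    lt_of_le_of_lt h1 (by rw [Ordinal.add_one_eq_succ]; exact Order.lt_succ o)
  rw [sigma0_gt_one hlt]
  exact ⟨fun _ => s, fun n => ⟨o, by rw [Ordinal.add_one_eq_succ]; exact Order.lt_succ o, hs⟩,
    (Set.iUnion_const s).symm⟩



/-- If `P` is Polish, `X` compact metrizable, `α ≥ 1` a countable ordinal, and
`f : P → K(X)` satisfies `{p : f p ⊆ W} ∈ Σ⁰_α ∪ Π⁰_α` for every open `W ⊆ X`, then `f`
is `Σ⁰_{α+1}`-measurable with respect to the Vietoris topology on `K(X)`. -/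

theorem stmt15 (P X : Type) [TopologicalSpace P] [PolishSpace P]
    [TopologicalSpace X] [CompactSpace X] [TopologicalSpace.MetrizableSpace X]
    (α : Ordinal.{0}) (hα1 : 1 ≤ α) (hαc : α.card ≤ Cardinal.aleph0)
    (f : P → {K : Set X // IsCompact K})
    (h : ∀ W : Set X, IsOpen W →
      {p : P | (f p).1 ⊆ W} ∈ sigma0 α ∨ {p : P | (f p).1 ⊆ W} ∈ pi0 α) :
    ∀ U : Set {K : Set X // IsCompact K},
      IsOpen[TopologicalSpace.induced Subtype.val (vietoris X)] U →
      f ⁻¹' U ∈ sigma0 (α + 1) := by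
  classical
  have h1 : (1 : Ordinal) < α + 1 :=
    lt_of_le_of_lt hα1 (by rw [Ordinal.add_one_eq_succ]; exact Order.lt_succ α)
  obtain ⟨B, hBc, -, hB⟩ := TopologicalSpace.exists_countable_basis X
  set S₁ : Set (Set {K : Set X // IsCompact K}) :=
    (fun T : Set (Set X) => Subtype.val ⁻¹' {K | K ⊆ ⋃₀ T}) '' {T | T.Finite ∧ T ⊆ B} with hS₁
  set S₂ : Set (Set {K : Set X // IsCompact K}) :=
    (fun b : Set X => Subtype.val ⁻¹' {K : Set X | (K ∩ b).Nonempty}) '' B with hS₂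
  set S : Set (Set {K : Set X // IsCompact K}) := S₁ ∪ S₂ with hS
  have hSc : S.Countable :=
    ((Set.countable_setOf_finite_subset hBc).image _).union (hBc.image _)
  -- the induced topology is generated by S
  have htop : TopologicalSpace.induced (Subtype.val : {K : Set X // IsCompact K} → Set X) (vietoris X)
      = TopologicalSpace.generateFrom S := by
    apply le_antisymm
    · apply le_generateFrom
      rintro s (⟨T, ⟨hTf, hTB⟩, rfl⟩ | ⟨b, hb, rfl⟩)
      · exact ⟨{K | K ⊆ ⋃₀ T}, TopologicalSpace.GenerateOpen.basic _
          (Or.inl ⟨⋃₀ T, isOpen_sUnion fun t ht => hB.isOpen (hTB ht), rfl⟩), rfl⟩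
      · exact ⟨{K | (K ∩ b).Nonempty}, TopologicalSpace.GenerateOpen.basic _
          (Or.inr ⟨b, hB.isOpen hb, rfl⟩), rfl⟩
    · rw [vietoris, induced_generateFrom_eq]
      apply le_generateFrom
      rintro s ⟨s0, hs0 | hs0, rfl⟩
      · obtain ⟨U, hU, rfl⟩ := hs0
        have heq : (Subtype.val : {K : Set X // IsCompact K} → Set X) ⁻¹' {K | K ⊆ U} =
            ⋃₀ {s | ∃ T : Set (Set X), (T.Finite ∧ T ⊆ B) ∧ ⋃₀ T ⊆ U ∧
              s = Subtype.val ⁻¹' {K : Set X | K ⊆ ⋃₀ T}} := by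
          ext ⟨K, hK⟩
          simp only [Set.mem_preimage, Set.mem_setOf_eq, Set.mem_sUnion]
          constructor
          · intro hKU
            have hcov : ∀ x ∈ K, ∃ b ∈ B, x ∈ b ∧ b ⊆ U := fun x hx =>
              hB.exists_subset_of_mem_open (hKU hx) hU
            have hKsub : K ⊆ ⋃ i : {b : Set X // b ∈ B ∧ b ⊆ U}, i.1 := by
              intro x hx
              obtain ⟨b, hbB, hxb, hbU⟩ := hcov x hx
              exact Set.mem_iUnion.2 ⟨⟨b, hbB, hbU⟩, hxb⟩
            obtain ⟨t, ht⟩ := hK.elim_finite_subcover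
              (fun i : {b : Set X // b ∈ B ∧ b ⊆ U} => i.1)
              (fun i => hB.isOpen i.2.1) hKsub
            refine ⟨_, ⟨Subtype.val '' (t : Set {b : Set X // b ∈ B ∧ b ⊆ U}),
              ⟨(t.finite_toSet.image _), ?_⟩, ?_, rfl⟩, ?_⟩
            · rintro _ ⟨i, -, rfl⟩; exact i.2.1
            · rintro x hx
              obtain ⟨_, ⟨i, -, rfl⟩, hxi⟩ := hx
              exact i.2.2 hxi
            · intro x hx
              obtain ⟨i, hit, hxi⟩ := Set.mem_iUnion₂.1 (ht hx)
              exact ⟨i.1, ⟨i, hit, rfl⟩, hxi⟩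
          · rintro ⟨s, ⟨T, ⟨-, -⟩, hTU, rfl⟩, hKs⟩
            exact fun x hx => hTU (hKs hx)
        rw [heq]
        refine TopologicalSpace.GenerateOpen.sUnion _ ?_
        rintro s ⟨T, hT, -, rfl⟩
        exact TopologicalSpace.GenerateOpen.basic _ (Or.inl ⟨T, hT, rfl⟩)
      · obtain ⟨U, hU, rfl⟩ := hs0
        have heq : (Subtype.val : {K : Set X // IsCompact K} → Set X) ⁻¹' {K | (K ∩ U).Nonempty} =
            ⋃₀ {s | ∃ b ∈ B, b ⊆ U ∧
              s = Subtype.val ⁻¹' {K : Set X | (K ∩ b).Nonempty}} := by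
          ext ⟨K, hK⟩
          simp only [Set.mem_preimage, Set.mem_setOf_eq, Set.mem_sUnion]
          constructor
          · rintro ⟨x, hxK, hxU⟩
            obtain ⟨b, hbB, hxb, hbU⟩ := hB.exists_subset_of_mem_open hxU hU
            exact ⟨_, ⟨b, hbB, hbU, rfl⟩, ⟨x, hxK, hxb⟩⟩
          · rintro ⟨s, ⟨b, -, hbU, rfl⟩, ⟨x, hxK, hxb⟩⟩
            exact ⟨x, hxK, hbU hxb⟩
        rw [heq]
        refine TopologicalSpace.GenerateOpen.sUnion _ ?_
        rintro s ⟨b, hb, -, rfl⟩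
        exact TopologicalSpace.GenerateOpen.basic _ (Or.inr ⟨b, hb, rfl⟩)
  -- preimages of elements of S are in sigma0 (α+1)
  have hpre : ∀ s ∈ S, f ⁻¹' s ∈ sigma0 (α + 1) := by
    rintro s (⟨T, ⟨hTf, hTB⟩, rfl⟩ | ⟨b, hb, rfl⟩)
    · have hW : IsOpen (⋃₀ T) := isOpen_sUnion fun t ht => hB.isOpen (hTB ht)
      have : f ⁻¹' (Subtype.val ⁻¹' {K : Set X | K ⊆ ⋃₀ T}) =
          {p : P | (f p).1 ⊆ ⋃₀ T} := rfl
      rw [this]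
      rcases h _ hW with hh | hh
      · exact mem_sigma0_succ_of_sigma0 hh
      · exact mem_sigma0_succ_of_pi0 hα1 hh
    · obtain ⟨C, hCcl, hCb⟩ := fsigma_of_isOpen (hB.isOpen hb)
      have heq : f ⁻¹' (Subtype.val ⁻¹' {K : Set X | (K ∩ b).Nonempty}) =
          ⋃ n, {p : P | (f p).1 ⊆ (C n)ᶜ}ᶜ := by
        ext p
        simp only [Set.mem_preimage, Set.mem_setOf_eq, Set.mem_iUnion, Set.mem_compl_iff,
          Set.not_subset]
        constructor
        · rintro ⟨x, hxf, hxb⟩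
          rw [hCb] at hxb
          obtain ⟨n, hxn⟩ := Set.mem_iUnion.1 hxb
          exact ⟨n, x, hxf, by simpa using hxn⟩
        · rintro ⟨n, x, hxf, hxn⟩
          refine ⟨x, hxf, ?_⟩
          rw [hCb]
          exact Set.mem_iUnion.2 ⟨n, by simpa using hxn⟩
      rw [heq]
      apply sigma0_iUnion h1
      intro n
      rcases h _ (hCcl n).isOpen_compl with hh | hh
      · exact mem_sigma0_succ_of_pi0 hα1 (by simpa [pi0] using hh)
      · exact mem_sigma0_succ_of_sigma0 hh
  -- basis of finite intersections
  have hbasis := @TopologicalSpace.isTopologicalBasis_of_subbasis {K : Set X // IsCompact K}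
    (TopologicalSpace.induced Subtype.val (vietoris X)) S htop
  intro U hU
  have hUeq := @TopologicalSpace.IsTopologicalBasis.open_eq_sUnion' {K : Set X // IsCompact K}
    (TopologicalSpace.induced Subtype.val (vietoris X)) _ hbasis U hU
  rw [hUeq, Set.preimage_sUnion]
  have hcnt : {s ∈ (fun g : Set (Set {K : Set X // IsCompact K}) => ⋂₀ g) '' {g : Set (Set {K : Set X // IsCompact K}) | g.Finite ∧ g ⊆ S} | s ⊆ U}.Countable :=
    (((Set.countable_setOf_finite_subset hSc).image _).mono (Set.sep_subset _ _))
  rw [← Set.sUnion_image]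
  apply sigma0_sUnion h1 (hcnt.image _)
  rintro _ ⟨c, hc, rfl⟩
  obtain ⟨⟨T, ⟨hTf, hTS⟩, rfl⟩, -⟩ := hc
  have : f ⁻¹' ⋂₀ T = ⋂₀ ((fun s => f ⁻¹' s) '' T) := by
    rw [Set.sInter_image, Set.preimage_sInter]
  rw [this]
  exact sigma0_sInter_finite h1 (hTf.image _)
    (by rintro _ ⟨s, hsT, rfl⟩; exact hpre s (hTS hsT))
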